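/- Let $(B_0,B_1)$ be a Banach couple satisfying Persson's condition (H), let $K\subset B_0$ be compact with associated constant $c(K)$, and let $P_\varepsilon$ be the operator provided by (H) for $\varepsilon>0$. Let $T:A_1\to B_1$ be as in Theorem 1 (with constants $C_0,C_1$, and $A_0\subset A_1$) and satisfy $Ta\in\|a\|_{A_0}K$ for each $a\in A_0$. Then the map $P_\varepsilon T-T$ satisfies the hypotheses of Theorem 1 with constants $\varepsilon$ and $C_1(c(K)+1)$, and consequently $\|(P_\varepsilon T-T)a\|_{(B_0,B_1)_{\theta,p}}\le\varepsilon^{1-\theta}\big(C_1(c(K)+1)\big)^{\theta}\|a\|_{(A_0,A_1)_{\theta,p}}$ for all $a\in(A_0,A_1)_{\theta,p}$, $\theta\in(0,1)$, $p\in[1,\infty]$. -/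

import Mathlib

open scoped ENNReal
open Filter Topology MeasureTheory

/-- A member of a Banach couple, modeled as an extended-real-valued norm on a common
ambient real vector space `X`; the space itself is `{x | N x < ∞}`.  The `complete`
field expresses that this space is a Banach space. -/
structure CoupleNorm (X : Type*) [AddCommGroup X] [Module ℝ X] where
  N : X → ℝ≥0∞
  zero : N 0 = 0
  add_le : ∀ x y, N (x + y) ≤ N x + N y
  smul_eq : ∀ (c : ℝ) (x : X), N (c • x) = ENNReal.ofReal |c| * N x
  definite : ∀ x, N x = 0 → x = 0
  complete : ∀ u : ℕ → X, (∀ n, N (u n) < ∞) →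
    (∀ ε : ℝ≥0∞, 0 < ε → ∃ n0, ∀ m n, n0 ≤ m → n0 ≤ n → N (u m - u n) < ε) →
    ∃ x, Tendsto (fun n => N (u n - x)) atTop (𝓝 0)

namespace CoupleNorm

variable {X : Type*} [AddCommGroup X] [Module ℝ X]

/-- The Peetre K-functional of the couple `(N0, N1)`. -/
noncomputable def Kfun (N0 N1 : CoupleNorm X) (t : ℝ) (x : X) : ℝ≥0∞ :=
  ⨅ y : X, N0.N y + ENNReal.ofReal t * N1.N (x - y)

/-- The measure dt/t on (0,∞). -/
noncomputable def haarMeas : Measure ℝ :=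
  (volume.restrict (Set.Ioi (0 : ℝ))).withDensity fun t => ENNReal.ofReal t⁻¹

/-- The real interpolation norm `(θ, p)`, for `p ∈ [1,∞]`, as an extended real. -/
noncomputable def interpNorm (N0 N1 : CoupleNorm X) (θ : ℝ) (p : ℝ≥0∞) (x : X) : ℝ≥0∞ :=
  if p = ∞ then ⨆ t : {t : ℝ // 0 < t}, (ENNReal.ofReal t.1) ^ (-θ) * Kfun N0 N1 t.1 x
  else (∫⁻ t, ((ENNReal.ofReal t) ^ (-θ) * Kfun N0 N1 t x) ^ p.toReal ∂haarMeas) ^ (1 / p.toReal)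

/-- `N0 ⊂ N1`: continuous embedding (the inclusion of domains is then automatic). -/
def Embeds (N0 N1 : CoupleNorm X) : Prop :=
  ∃ c : ℝ, 0 < c ∧ ∀ x, N1.N x ≤ ENNReal.ofReal c * N0.N x

/-- A set bounded with respect to a generalized norm. -/
def BddWith (NN : X → ℝ≥0∞) (S : Set X) : Prop :=
  ∃ R : ℝ, ∀ x ∈ S, NN x ≤ ENNReal.ofReal R

/-- Sequential relative compactness with respect to a generalized norm. -/
def RelCompactWith (NN : X → ℝ≥0∞) (S : Set X) : Prop :=
  ∀ u : ℕ → X, (∀ n, u n ∈ S) →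
    ∃ (σ : ℕ → ℕ) (x : X), StrictMono σ ∧
      Tendsto (fun n => NN (u (σ n) - x)) atTop (𝓝 0)

/-- Sequential compactness (with limits inside the set) w.r.t. a generalized norm. -/
def CompactWith (NN : X → ℝ≥0∞) (S : Set X) : Prop :=
  ∀ u : ℕ → X, (∀ n, u n ∈ S) →
    ∃ x ∈ S, ∃ σ : ℕ → ℕ, StrictMono σ ∧
      Tendsto (fun n => NN (u (σ n) - x)) atTop (𝓝 0)

end CoupleNorm

namespace CoupleNorm

variable {X : Type*} [AddCommGroup X] [Module ℝ X]

lemma N_neg (B : CoupleNorm X) (x : X) : B.N (-x) = B.N x := by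
  simpa [neg_one_smul] using B.smul_eq (-1) x

lemma N_sub_le (B : CoupleNorm X) (x y : X) : B.N (x - y) ≤ B.N x + B.N y := by
  rw [sub_eq_add_neg]
  exact (B.add_le x (-y)).trans (by rw [B.N_neg])

lemma Kfun_mono (N0 N1 : CoupleNorm X) (x : X) : Monotone fun t => Kfun N0 N1 t x := by
  intro s t hst
  exact iInf_mono fun y =>
    add_le_add le_rfl (mul_le_mul' (ENNReal.ofReal_le_ofReal hst) le_rfl)

lemma haar_ae_pos : ∀ᵐ t ∂haarMeas, (0:ℝ) < t :=
  (withDensity_absolutelyContinuous _ _).ae_le (ae_restrict_mem measurableSet_Ioi)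

lemma haar_scale {g : ℝ → ℝ≥0∞} (hg : Measurable g) {l : ℝ} (hl : 0 < l) :
    ∫⁻ t, g (l * t) ∂haarMeas = ∫⁻ t, g t ∂haarMeas := by
  have hd : Measurable fun t : ℝ => ENNReal.ofReal t⁻¹ :=
    ENNReal.measurable_ofReal.comp measurable_inv
  have hgl : Measurable fun t : ℝ => g (l * t) := hg.comp (measurable_const_mul l)
  rw [haarMeas, lintegral_withDensity_eq_lintegral_mul _ hd hgl,
    lintegral_withDensity_eq_lintegral_mul _ hd hg]
  have hF : Measurable fun s : ℝ => ENNReal.ofReal (l * s⁻¹) * g s :=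
    (ENNReal.measurable_ofReal.comp (measurable_inv.const_mul l)).mul hg
  have hmap : Measure.map (fun t : ℝ => l * t) (volume.restrict (Set.Ioi (0:ℝ)))
      = ENNReal.ofReal l⁻¹ • volume.restrict (Set.Ioi (0:ℝ)) := by
    have hpre : (fun t : ℝ => l * t) ⁻¹' (Set.Ioi 0) = Set.Ioi 0 := by
      ext t; simp [Set.mem_Ioi, mul_pos_iff_of_pos_left hl]
    rw [← hpre, ← Measure.restrict_map (measurable_const_mul l) measurableSet_Ioi,
      Real.map_volume_mul_left (ne_of_gt hl), hpre]
    rw [Measure.restrict_smul]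
    congr 1
    rw [abs_of_pos (inv_pos.mpr hl)]
  have key : ∫⁻ t in Set.Ioi (0:ℝ), ENNReal.ofReal (l * t⁻¹) * g t ∂volume
      = ENNReal.ofReal l * ∫⁻ t in Set.Ioi (0:ℝ), ENNReal.ofReal t⁻¹ * g t ∂volume := by
    rw [← lintegral_const_mul _ (show Measurable fun t : ℝ => ENNReal.ofReal t⁻¹ * g t from hd.mul hg)]
    refine setLIntegral_congr_fun measurableSet_Ioi (fun t ht => ?_)
    rw [← mul_assoc, ← ENNReal.ofReal_mul (le_of_lt hl)]
  calc ∫⁻ t in Set.Ioi (0:ℝ), ((fun t => ENNReal.ofReal t⁻¹) * fun t => g (l * t)) t ∂volume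
      = ∫⁻ t in Set.Ioi (0:ℝ), (fun s => ENNReal.ofReal (l * s⁻¹) * g s) (l * t) ∂volume := by
        refine setLIntegral_congr_fun measurableSet_Ioi
          (fun t ht => ?_)
        simp only [Pi.mul_apply]
        congr 2
        rw [mul_inv, ← mul_assoc, mul_inv_cancel₀ (ne_of_gt hl), one_mul]
    _ = ∫⁻ s, (fun s => ENNReal.ofReal (l * s⁻¹) * g s) s
          ∂(Measure.map (fun t : ℝ => l * t) (volume.restrict (Set.Ioi (0:ℝ)))) := by
        rw [lintegral_map hF (measurable_const_mul l)]
    _ = ENNReal.ofReal l⁻¹ * ∫⁻ s in Set.Ioi (0:ℝ), ENNReal.ofReal (l * s⁻¹) * g s ∂volume := by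
        rw [hmap, lintegral_smul_measure, smul_eq_mul]
    _ = ∫⁻ t in Set.Ioi (0:ℝ), ((fun t => ENNReal.ofReal t⁻¹) * g) t ∂volume := by
        rw [key, ← mul_assoc, ENNReal.ofReal_inv_of_pos hl,
          ENNReal.inv_mul_cancel (by simp [hl]) ENNReal.ofReal_ne_top, one_mul]
        rfl

/-- Theorem 1 (real interpolation estimate for Lipschitz-type maps). -/
lemma thm1 {X Y : Type*} [AddCommGroup X] [Module ℝ X] [AddCommGroup Y] [Module ℝ Y]
    (A0 A1 : CoupleNorm X) (B0 B1 : CoupleNorm Y) (hA : Embeds A0 A1)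
    (S : X → Y) (D0 D1 : ℝ) (hD0 : 0 < D0) (hD1 : 0 < D1)
    (hS0 : ∀ a : X, B0.N (S a) ≤ ENNReal.ofReal D0 * A0.N a)
    (hS1 : ∀ a a' : X, A1.N a < ∞ → A1.N a' < ∞ →
      B1.N (S a - S a') ≤ ENNReal.ofReal D1 * A1.N (a - a'))
    {θ : ℝ} (hθ0 : 0 < θ) (hθ1 : θ < 1) {p : ℝ≥0∞} (hp : 1 ≤ p)
    (a : X) (ha : A1.N a < ∞) :
    interpNorm B0 B1 θ p (S a) ≤
      ENNReal.ofReal (D0 ^ (1 - θ) * D1 ^ θ) * interpNorm A0 A1 θ p a := by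
  set l : ℝ := D1 / D0 with hldef
  have hl : 0 < l := div_pos hD1 hD0
  -- K-functional comparison
  have hK : ∀ t : ℝ, 0 < t →
      Kfun B0 B1 t (S a) ≤ ENNReal.ofReal D0 * Kfun A0 A1 (l * t) a := by
    intro t ht
    simp only [Kfun]
    rw [ENNReal.mul_iInf (fun h => (ENNReal.ofReal_ne_top h).elim)]
    refine le_iInf fun y => ?_
    by_cases hy : A0.N y = ∞
    · rw [hy, top_add, ENNReal.mul_top (by simp [hD0])]
      exact le_top
    · obtain ⟨cA, hcA, hEmb⟩ := hA
      have hy1 : A1.N y < ∞ :=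
        lt_of_le_of_lt (hEmb y)
          (ENNReal.mul_lt_top ENNReal.ofReal_lt_top (lt_top_iff_ne_top.mpr hy))
      have step : Kfun B0 B1 t (S a) ≤ B0.N (S y) + ENNReal.ofReal t * B1.N (S a - S y) :=
        iInf_le _ (S y)
    -- bound each term
      refine step.trans ?_
      have h2 : ENNReal.ofReal t * B1.N (S a - S y)
          ≤ ENNReal.ofReal t * (ENNReal.ofReal D1 * A1.N (a - y)) :=
        mul_le_mul' le_rfl (hS1 a y ha hy1)
      refine (add_le_add (hS0 y) h2).trans (le_of_eq ?_)
      have hmul : ENNReal.ofReal t * (ENNReal.ofReal D1 * A1.N (a - y))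
          = ENNReal.ofReal D0 * (ENNReal.ofReal (l * t) * A1.N (a - y)) := by
        rw [← mul_assoc, ← mul_assoc, ← ENNReal.ofReal_mul ht.le,
          ← ENNReal.ofReal_mul hD0.le]
        congr 2
        field_simp [hldef]
        rw [hldef]; field_simp
      rw [mul_add, hmul]
  -- pointwise comparison of weighted K-functionals
  set C : ℝ≥0∞ := ENNReal.ofReal D0 * (ENNReal.ofReal l) ^ θ with hCdef
  have hCne0 : (ENNReal.ofReal l : ℝ≥0∞) ≠ 0 := by simp [hl]
  have hPW : ∀ t : ℝ, 0 < t →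
      (ENNReal.ofReal t) ^ (-θ) * Kfun B0 B1 t (S a)
        ≤ C * ((ENNReal.ofReal (l * t)) ^ (-θ) * Kfun A0 A1 (l * t) a) := by
    intro t ht
    have hsplit : (ENNReal.ofReal (l * t)) ^ (-θ)
        = (ENNReal.ofReal l) ^ (-θ) * (ENNReal.ofReal t) ^ (-θ) := by
      rw [ENNReal.ofReal_mul hl.le,
        ENNReal.mul_rpow_of_ne_top ENNReal.ofReal_ne_top ENNReal.ofReal_ne_top]
    have hcancel : (ENNReal.ofReal l) ^ θ * (ENNReal.ofReal l) ^ (-θ) = 1 := by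
      rw [← ENNReal.rpow_add _ _ hCne0 ENNReal.ofReal_ne_top]
      simp
    calc (ENNReal.ofReal t) ^ (-θ) * Kfun B0 B1 t (S a)
        ≤ (ENNReal.ofReal t) ^ (-θ) * (ENNReal.ofReal D0 * Kfun A0 A1 (l * t) a) :=
          mul_le_mul' le_rfl (hK t ht)
      _ = C * ((ENNReal.ofReal (l * t)) ^ (-θ) * Kfun A0 A1 (l * t) a) := by
          rw [hsplit, hCdef]
          trans ENNReal.ofReal D0 * ((ENNReal.ofReal l) ^ θ * (ENNReal.ofReal l) ^ (-θ)) *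
            ((ENNReal.ofReal t) ^ (-θ) * Kfun A0 A1 (l * t) a)
          · rw [hcancel, mul_one]; ring
          · ring
  -- the constant
  have hCval : C = ENNReal.ofReal (D0 ^ (1 - θ) * D1 ^ θ) := by
    rw [hCdef, ENNReal.ofReal_rpow_of_pos hl, ← ENNReal.ofReal_mul hD0.le]
    congr 1
    rw [hldef, Real.div_rpow hD1.le hD0.le, Real.rpow_sub hD0, Real.rpow_one]
    have h0 : (0:ℝ) < D0 ^ θ := Real.rpow_pos_of_pos hD0 θ
    field_simp
  rw [← hCval]
  by_cases hpinf : p = ∞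
  · rw [interpNorm, interpNorm, if_pos hpinf, if_pos hpinf]
    refine iSup_le fun t => ?_
    refine (hPW t.1 t.2).trans ?_
    exact mul_le_mul' le_rfl (le_iSup_of_le ⟨l * t.1, mul_pos hl t.2⟩ le_rfl)
  · -- finite p
    set q : ℝ := p.toReal with hqdef
    have hp0 : p ≠ 0 := by
      intro h; rw [h] at hp; exact absurd hp (by simp)
    have hq : 0 < q := ENNReal.toReal_pos hp0 hpinf
    rw [interpNorm, interpNorm, if_neg hpinf, if_neg hpinf]
    set G : ℝ → ℝ≥0∞ := fun s => ((ENNReal.ofReal s) ^ (-θ) * Kfun A0 A1 s a) ^ q with hGdef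
    have hGmeas : Measurable G := by
      have h1 : Measurable fun s : ℝ => (ENNReal.ofReal s) ^ (-θ) := by measurability
      have h2 : Measurable fun s : ℝ => Kfun A0 A1 s a := (Kfun_mono A0 A1 a).measurable
      have h3 : Measurable fun s : ℝ => (ENNReal.ofReal s) ^ (-θ) * Kfun A0 A1 s a := h1.mul h2
      have h4 : Measurable fun x : ℝ≥0∞ => x ^ q := by measurability
      exact h4.comp h3
    have step1 : ∫⁻ t, ((ENNReal.ofReal t) ^ (-θ) * Kfun B0 B1 t (S a)) ^ q ∂haarMeas
        ≤ ∫⁻ t, C ^ q * G (l * t) ∂haarMeas := by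
      refine lintegral_mono_ae (haar_ae_pos.mono fun t ht => ?_)
      rw [hGdef]
      dsimp only
      rw [← ENNReal.mul_rpow_of_nonneg _ _ hq.le]
      exact ENNReal.rpow_le_rpow (hPW t ht) hq.le
    have step2 : ∫⁻ t, C ^ q * G (l * t) ∂haarMeas = C ^ q * ∫⁻ s, G s ∂haarMeas := by
      rw [lintegral_const_mul _ ((show Measurable fun t : ℝ => G (l*t) from hGmeas.comp (measurable_const_mul l))), haar_scale hGmeas hl]
    refine (ENNReal.rpow_le_rpow (step1.trans_eq step2) (by positivity)).trans (le_of_eq ?_)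
    rw [ENNReal.mul_rpow_of_nonneg _ _ (by positivity), ← ENNReal.rpow_mul,
      mul_one_div_cancel hq.ne', ENNReal.rpow_one]

end CoupleNorm

/-- `P_ε T - T` satisfies the Theorem 1 hypotheses with constants
`ε` and `C1 (c(K)+1)`, and the resulting interpolation estimate. -/
theorem stmt11 {X Y : Type*} [AddCommGroup X] [Module ℝ X] [AddCommGroup Y] [Module ℝ Y]
    (A0 A1 : CoupleNorm X) (B0 B1 : CoupleNorm Y)
    (hA : CoupleNorm.Embeds A0 A1)
    (T : X → Y) (C0 C1 : ℝ) (hC0 : 0 < C0) (hC1 : 0 < C1)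
    (hT0 : ∀ a : X, B0.N (T a) ≤ ENNReal.ofReal C0 * A0.N a)
    (hT1 : ∀ a a' : X, A1.N a < ∞ → A1.N a' < ∞ →
      B1.N (T a - T a') ≤ ENNReal.ofReal C1 * A1.N (a - a'))
    (K : Set Y) (hKsub : K ⊆ {b | B0.N b < ∞}) (hKcpt : CoupleNorm.CompactWith B0.N K)
    (hTK : ∀ a : X, A0.N a < ∞ → ∃ k ∈ K, T a = (A0.N a).toReal • k)
    (c ε : ℝ) (hc : 0 < c) (hε : 0 < ε) (P : Y →ₗ[ℝ] Y)
    (hPmem : ∀ b : Y, (B0.N b < ∞ ∨ B1.N b < ∞) → B0.N (P b) < ∞ ∧ B1.N (P b) < ∞)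
    (hP0 : ∀ b : Y, B0.N (P b) ≤ ENNReal.ofReal c * B0.N b)
    (hP1 : ∀ b : Y, B1.N (P b) ≤ ENNReal.ofReal c * B1.N b)
    (hPapp : ∀ b ∈ K, B0.N (P b - b) < ENNReal.ofReal ε) :
    (∀ a : X, B0.N (P (T a) - T a) ≤ ENNReal.ofReal ε * A0.N a) ∧
    (∀ a a' : X, A1.N a < ∞ → A1.N a' < ∞ →
      B1.N ((P (T a) - T a) - (P (T a') - T a')) ≤
        ENNReal.ofReal (C1 * (c + 1)) * A1.N (a - a')) ∧
    (∀ θ : ℝ, 0 < θ → θ < 1 → ∀ p : ℝ≥0∞, 1 ≤ p → ∀ a : X, A1.N a < ∞ →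
      CoupleNorm.interpNorm B0 B1 θ p (P (T a) - T a) ≤
        ENNReal.ofReal (ε ^ (1 - θ) * (C1 * (c + 1)) ^ θ) *
          CoupleNorm.interpNorm A0 A1 θ p a) := by

  have h0 : ∀ a : X, B0.N (P (T a) - T a) ≤ ENNReal.ofReal ε * A0.N a := by
    intro a
    by_cases hfin : A0.N a < ∞
    · obtain ⟨k, hk, hTa⟩ := hTK a hfin
      have hre : P (T a) - T a = (A0.N a).toReal • (P k - k) := by
        rw [hTa, _root_.map_smul, smul_sub]
      rw [hre, B0.smul_eq, abs_of_nonneg ENNReal.toReal_nonneg,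
        ENNReal.ofReal_toReal hfin.ne]
      calc A0.N a * B0.N (P k - k) ≤ A0.N a * ENNReal.ofReal ε :=
            mul_le_mul' le_rfl (hPapp k hk).le
        _ = ENNReal.ofReal ε * A0.N a := mul_comm _ _
    · rw [top_le_iff.mp (not_lt.mp hfin), ENNReal.mul_top (by simp [hε])]
      exact le_top
  have h1 : ∀ a a' : X, A1.N a < ∞ → A1.N a' < ∞ →
      B1.N ((P (T a) - T a) - (P (T a') - T a')) ≤
        ENNReal.ofReal (C1 * (c + 1)) * A1.N (a - a') := by
    intro a a' hfa hfa'
    have hre : (P (T a) - T a) - (P (T a') - T a') = P (T a - T a') - (T a - T a') := by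
      rw [map_sub]; abel
    rw [hre]
    refine (B1.N_sub_le _ _).trans ?_
    have hw := hT1 a a' hfa hfa'
    have h2 := (hP1 (T a - T a')).trans (mul_le_mul' le_rfl hw)
    calc B1.N (P (T a - T a')) + B1.N (T a - T a')
        ≤ ENNReal.ofReal c * (ENNReal.ofReal C1 * A1.N (a - a'))
            + ENNReal.ofReal C1 * A1.N (a - a') := add_le_add h2 hw
      _ = ENNReal.ofReal (C1 * (c + 1)) * A1.N (a - a') := by
          rw [ENNReal.ofReal_mul hC1.le, ENNReal.ofReal_add hc.le zero_le_one,
            ENNReal.ofReal_one]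
          ring
  refine ⟨h0, h1, fun θ hθ0 hθ1 p hp a ha => ?_⟩
  exact CoupleNorm.thm1 A0 A1 B0 B1 hA (fun a => P (T a) - T a) ε (C1 * (c + 1)) hε
    (by positivity) h0 h1 hθ0 hθ1 hp a ha
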